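/- arXiv:2004.04770 — 3 statements merged into one kernel-verified Lean document; each statement's English description precedes it below -/
import Mathlib

section
/- Let A be a fixed real symmetric m×m matrix, and for w ∈ (0,∞)^m let W(w) = diag(√w_1,…,√w_m) and A_W = W A W. Suppose at a point w⁰ ∈ (0,∞)^m the operator norm of A_{W(w⁰)} is strictly less than 1 (so I − A_W² is positive definite). For n̄ ∈ ℕ^m define P(w, n̄) = (det(I − A_W²))^{1/2} · Haf(A_{n̄})² · ∏_{i=1}^m w_i^{n_i}/n_i!. Then for each k, the partial derivative ∂P/∂w_k at w⁰ exists and equals ((n_k − ⟨n_k⟩)/w⁰_k) · P(w⁰, n̄), where ⟨n_k⟩ := (A_W² (I − A_W²)^{-1})_{kk} evaluated at w⁰. -/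
open Finset Matrix
open scoped Matrix.Norms.L2Operator

open scoped Classical in
/-- The hafnian of a matrix: the sum over all perfect matchings of the index set
(encoded as fixed-point-free involutions `σ`), of the product of the entries
`A i (σ i)` over the pairs `{i, σ i}` (each pair taken once, via `i < σ i`).
For an empty index type this is `1`, and for an odd-cardinality index type it is `0`. -/
noncomputable def hafnian {ι : Type*} [Fintype ι] [LinearOrder ι] {R : Type*} [CommRing R]
    (A : Matrix ι ι R) : R :=
  ∑ σ ∈ Finset.univ.filter
      (fun σ : Equiv.Perm ι => σ * σ = 1 ∧ ∀ i, σ i ≠ i),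
    ∏ i ∈ Finset.univ.filter (fun i => i < σ i), A i (σ i)

/-- The index type for `A_n̄` (row/column `i` repeated `n i` times), ordered
lexicographically. -/
instance repIdxFintype {M : ℕ} (n : Fin M → ℕ) : Fintype (Σₗ i : Fin M, Fin (n i)) :=
  inferInstanceAs (Fintype ((i : Fin M) × Fin (n i)))

/-- `A_n̄`: the matrix obtained from the `M × M` matrix `A` by repeating row and column `i`
exactly `n i` times (deleting them when `n i = 0`).  Note that `hafnian (repMat A n) = 0`
automatically when `Σ n_i` is odd. -/
def repMat {M : ℕ} {R : Type*} (A : Matrix (Fin M) (Fin M) R) (n : Fin M → ℕ) :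
    Matrix (Σₗ i : Fin M, Fin (n i)) (Σₗ i : Fin M, Fin (n i)) R :=
  A.submatrix (fun p => (ofLex p).1) (fun p => (ofLex p).1)

/-- `A_W = W A W` with `W = diag(√w_1,…,√w_m)`. -/
noncomputable def WAW {m : ℕ} (A : Matrix (Fin m) (Fin m) ℝ) (w : Fin m → ℝ) :
    Matrix (Fin m) (Fin m) ℝ :=
  Matrix.diagonal (fun i => Real.sqrt (w i)) * A * Matrix.diagonal (fun i => Real.sqrt (w i))

/-- The GBS probability (WAW parametrization):
`P(w, n̄) = det(I − A_W²)^{1/2} · Haf(A_n̄)² · ∏_i w_i^{n_i}/n_i!`. -/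
noncomputable def Pgbs {m : ℕ} (A : Matrix (Fin m) (Fin m) ℝ) (n : Fin m → ℕ)
    (w : Fin m → ℝ) : ℝ :=
  Real.sqrt (1 - WAW A w ^ 2).det * hafnian (repMat A n) ^ 2 *
    ∏ i, w i ^ n i / (Nat.factorial (n i) : ℝ)

/-- `⟨n_k⟩ = (A_W² (I − A_W²)⁻¹)_{kk}`, the mean photon number in mode `k`. -/
noncomputable def navg {m : ℕ} (A : Matrix (Fin m) (Fin m) ℝ) (w : Fin m → ℝ)
    (k : Fin m) : ℝ :=
  (WAW A w ^ 2 * (1 - WAW A w ^ 2)⁻¹ : Matrix (Fin m) (Fin m) ℝ) k k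




section conj
variable {m : ℕ} (A : Matrix (Fin m) (Fin m) ℝ) (w : Fin m → ℝ) (hw : ∀ i, 0 < w i)
include hw

local notation "Wd" => Matrix.diagonal (fun i => Real.sqrt (w i))
local notation "Wd'" => Matrix.diagonal (fun i => (Real.sqrt (w i))⁻¹)
local notation "Dm" => Matrix.diagonal w

lemma sqrt_ne (i : Fin m) : Real.sqrt (w i) ≠ 0 :=
  ne_of_gt (Real.sqrt_pos.2 (hw i))

lemma WdWd : Wd * Wd = Dm := by
  have h : (fun i => Real.sqrt (w i) * Real.sqrt (w i)) = w :=
    funext fun i => Real.mul_self_sqrt (hw i).le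
  rw [Matrix.diagonal_mul_diagonal, h]

lemma WdWd' : Wd * Wd' = 1 := by
  rw [Matrix.diagonal_mul_diagonal]
  rw [show (fun i => Real.sqrt (w i) * (Real.sqrt (w i))⁻¹) = fun _ => (1:ℝ) from
    funext fun i => mul_inv_cancel₀ (sqrt_ne w hw i), Matrix.diagonal_one]

lemma Wd'Wd : Wd' * Wd = 1 := by
  rw [Matrix.diagonal_mul_diagonal]
  rw [show (fun i => (Real.sqrt (w i))⁻¹ * Real.sqrt (w i)) = fun _ => (1:ℝ) from
    funext fun i => inv_mul_cancel₀ (sqrt_ne w hw i), Matrix.diagonal_one]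

lemma DmWd' : Dm * Wd' = Wd := by
  have h : (fun i => w i * (Real.sqrt (w i))⁻¹) = fun i => Real.sqrt (w i) := by
    funext i
    have h1 : w i = Real.sqrt (w i) * Real.sqrt (w i) := (Real.mul_self_sqrt (hw i).le).symm
    nth_rewrite 1 [h1]
    rw [mul_inv_cancel_right₀ (sqrt_ne w hw i)]
  rw [Matrix.diagonal_mul_diagonal, h]

lemma one_sub_WAW_sq :
    1 - WAW A w ^ 2 = Wd * (1 - A * Dm * A * Dm) * Wd' := by
  have h2 : WAW A w ^ 2 = Wd * (A * Dm * A * Dm) * Wd' := by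
    rw [pow_two, WAW]
    rw [show Wd * A * Wd * (Wd * A * Wd) = Wd * (A * (Wd * Wd) * A) * Wd by
      simp only [Matrix.mul_assoc]]
    rw [WdWd w hw]
    rw [show Wd * (A * Dm * A * Dm) * Wd' = Wd * (A * Dm * A) * (Dm * Wd') by
      simp only [Matrix.mul_assoc]]
    rw [DmWd' w hw]
  rw [Matrix.mul_sub, Matrix.sub_mul, Matrix.mul_one, WdWd' w hw, h2]

lemma WAW_sq_conj :
    WAW A w ^ 2 = Wd * (A * Dm * A * Dm) * Wd' := by
  have h := one_sub_WAW_sq A w hw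
  have h2 : Wd * (1 - A * Dm * A * Dm) * Wd' = 1 - Wd * (A * Dm * A * Dm) * Wd' := by
    rw [Matrix.mul_sub, Matrix.sub_mul, Matrix.mul_one, WdWd' w hw]
  rw [h2] at h
  exact sub_right_injective h

lemma det_conj :
    (1 - WAW A w ^ 2).det = (1 - A * Dm * A * Dm).det := by
  rw [one_sub_WAW_sq A w hw, Matrix.det_mul, Matrix.det_mul]
  rw [mul_comm, ← mul_assoc, ← Matrix.det_mul, Wd'Wd w hw, Matrix.det_one, one_mul]

end conj


/-- Derivative of `t ↦ det (f t)` when each entry has a derivative. -/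
lemma hasDerivAt_det_aux {m : ℕ} (f : ℝ → Matrix (Fin m) (Fin m) ℝ)
    (N' : Matrix (Fin m) (Fin m) ℝ) (t0 : ℝ)
    (h : ∀ i j, HasDerivAt (fun t => f t i j) (N' i j) t0) :
    HasDerivAt (fun t => (f t).det) ((Matrix.adjugate (f t0) * N').trace) t0 := by
  have key : HasDerivAt (fun t => (f t).det)
      (∑ σ : Equiv.Perm (Fin m), (Equiv.Perm.sign σ : ℝ) *
        (∑ j, (∏ i ∈ Finset.univ.erase j, f t0 (σ i) i) • N' (σ j) j)) t0 := by
    have : ∀ t, (f t).det = ∑ σ : Equiv.Perm (Fin m),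
        (Equiv.Perm.sign σ : ℝ) * ∏ i, f t (σ i) i := fun t => Matrix.det_apply' (f t)
    simp only [this]
    exact HasDerivAt.fun_sum fun σ _ =>
      (HasDerivAt.fun_finsetProd (fun i _ => h (σ i) i)).const_mul _
  convert key using 1
  rw [Matrix.trace]
  have hdet : ∀ j : Fin m, (Matrix.adjugate (f t0) * N') j j
      = ∑ σ : Equiv.Perm (Fin m), (Equiv.Perm.sign σ : ℝ) *
          ((∏ i ∈ Finset.univ.erase j, f t0 (σ i) i) * N' (σ j) j) := by
    intro j
    have h1 : (Matrix.adjugate (f t0) * N') j j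
        = Matrix.cramer (f t0) (fun i => N' i j) j := by
      rw [Matrix.cramer_eq_adjugate_mulVec, Matrix.mulVec, Matrix.mul_apply]; rfl
    rw [h1, Matrix.cramer_apply, Matrix.det_apply']
    refine Finset.sum_congr rfl fun σ _ => ?_
    congr 1
    rw [← Finset.mul_prod_erase _ _ (Finset.mem_univ j)]
    rw [Matrix.updateCol_self]
    rw [mul_comm]
    congr 1
    exact Finset.prod_congr rfl fun i hi =>
      Matrix.updateCol_ne (Finset.ne_of_mem_erase hi)
  simp only [Matrix.diag_apply, hdet, smul_eq_mul]
  rw [Finset.sum_comm]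
  exact Finset.sum_congr rfl fun σ _ => by rw [Finset.mul_sum]









lemma dot_self_eq_norm_sq {m : ℕ} (v : Fin m → ℝ) :
    v ⬝ᵥ v = ‖(EuclideanSpace.equiv (Fin m) ℝ).symm v‖ ^ 2 := by
  rw [EuclideanSpace.norm_eq, Real.sq_sqrt (by positivity)]
  simp [dotProduct, sq]

lemma posdef_one_sub_sq {m : ℕ} (A : Matrix (Fin m) (Fin m) ℝ) (hA : A.IsSymm)
    (w0 : Fin m → ℝ) (hnorm : ‖WAW A w0‖ < 1) :
    (1 - WAW A w0 ^ 2).PosDef := by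
  set M := WAW A w0 with hM
  have hMsymm : Mᵀ = M := by
    rw [hM, WAW, Matrix.transpose_mul, Matrix.transpose_mul, Matrix.diagonal_transpose, hA, Matrix.mul_assoc]
  rw [Matrix.posDef_iff_dotProduct_mulVec]
  constructor
  · rw [Matrix.IsHermitian, Matrix.conjTranspose_eq_transpose_of_trivial,
      Matrix.transpose_sub, Matrix.transpose_one, Matrix.transpose_pow, hMsymm]
  · intro x hx
    rw [star_trivial]
    rw [Matrix.sub_mulVec, Matrix.one_mulVec, dotProduct_sub]
    have hsq : (M ^ 2) *ᵥ x = M *ᵥ (M *ᵥ x) := by rw [pow_two, ← Matrix.mulVec_mulVec]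
    have h3 : x ᵥ* M = M *ᵥ x := by
      nth_rewrite 1 [← hMsymm]; exact Matrix.vecMul_transpose M x
    have hdd : x ⬝ᵥ (M ^ 2) *ᵥ x = (M *ᵥ x) ⬝ᵥ (M *ᵥ x) := by
      rw [hsq, Matrix.dotProduct_mulVec x M (M *ᵥ x), h3]
    rw [hdd, dot_self_eq_norm_sq, dot_self_eq_norm_sq, sub_pos]
    have hle := Matrix.l2_opNorm_mulVec M ((EuclideanSpace.equiv (Fin m) ℝ).symm x)
    have hxpos : 0 < ‖(EuclideanSpace.equiv (Fin m) ℝ).symm x‖ := by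
      simpa [norm_pos_iff] using hx
    calc ‖(EuclideanSpace.equiv (Fin m) ℝ).symm (M *ᵥ x)‖ ^ 2
        ≤ (‖M‖ * ‖(EuclideanSpace.equiv (Fin m) ℝ).symm x‖) ^ 2 := by
          apply pow_le_pow_left₀ (norm_nonneg _) _ 2
          exact hle
      _ < ‖(EuclideanSpace.equiv (Fin m) ℝ).symm x‖ ^ 2 := by
          rw [mul_pow]
          have h1 : ‖M‖ ^ 2 < 1 := by
            nlinarith [norm_nonneg M, hnorm]
          have hs : 0 < ‖(EuclideanSpace.equiv (Fin m) ℝ).symm x‖ ^ 2 := pow_pos hxpos 2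
          have := mul_lt_mul_of_pos_right h1 hs
          simpa using this


lemma trace_mul_single {m : ℕ} (k : Fin m) (P : Matrix (Fin m) (Fin m) ℝ) :
    (P * Matrix.single k k (1:ℝ)).trace = P k k := by
  rw [Matrix.trace, Finset.sum_eq_single k]
  · simp [Matrix.diag]
  · intro i _ hik
    simp [Matrix.diag, hik]
  · simp

section alg
variable {m : ℕ} (A : Matrix (Fin m) (Fin m) ℝ) (w0 : Fin m → ℝ) (k : Fin m)

local notation "Dm" => Matrix.diagonal w0
local notation "Em" => Matrix.single k k (1:ℝ)
local notation "Bm" => A * Matrix.diagonal w0 * A * Matrix.diagonal w0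
local notation "Nm" => 1 - A * Matrix.diagonal w0 * A * Matrix.diagonal w0

lemma NB_comm (hdet : IsUnit (Nm).det) : Nm⁻¹ * Bm = Bm * Nm⁻¹ := by
  have e1 : Nm⁻¹ * Bm = Nm⁻¹ - 1 := by
    have h : Nm⁻¹ * Bm = Nm⁻¹ * 1 - Nm⁻¹ * Nm := by
      rw [← Matrix.mul_sub]; congr 1; rw [sub_sub_cancel]
    rw [h, Matrix.mul_one, Matrix.nonsing_inv_mul _ hdet]
  have e2 : Bm * Nm⁻¹ = Nm⁻¹ - 1 := by
    have h : Bm * Nm⁻¹ = 1 * Nm⁻¹ - Nm * Nm⁻¹ := by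
      rw [← Matrix.sub_mul]; congr 1; rw [sub_sub_cancel]
    rw [h, Matrix.one_mul, Matrix.mul_nonsing_inv _ hdet]
  rw [e1, e2]

lemma key_entry (hA : A.IsSymm) (hdet : IsUnit (Nm).det) :
    (A * Dm * Nm⁻¹ * A) k k = (Nm⁻¹ * (A * Dm * A)) k k := by
  have hNT : (Nm)ᵀ = 1 - Dm * A * Dm * A := by
    rw [Matrix.transpose_sub, Matrix.transpose_one, Matrix.transpose_mul, Matrix.transpose_mul,
      Matrix.transpose_mul, Matrix.diagonal_transpose, hA]
    simp [Matrix.mul_assoc]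
  have hTdet : IsUnit ((Nm)ᵀ).det := by rwa [Matrix.det_transpose]
  have hswap : Nm * A = A * (Nm)ᵀ := by
    rw [hNT]
    simp [Matrix.sub_mul, Matrix.mul_sub, Matrix.mul_assoc]
  have hpush : A * ((Nm)ᵀ)⁻¹ = Nm⁻¹ * A := by
    calc A * ((Nm)ᵀ)⁻¹ = Nm⁻¹ * (Nm * A) * ((Nm)ᵀ)⁻¹ := by
          rw [← Matrix.mul_assoc, Matrix.nonsing_inv_mul _ hdet, Matrix.one_mul]
      _ = Nm⁻¹ * A * ((Nm)ᵀ * ((Nm)ᵀ)⁻¹) := by rw [hswap]; simp [Matrix.mul_assoc]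
      _ = Nm⁻¹ * A := by rw [Matrix.mul_nonsing_inv _ hTdet, Matrix.mul_one]
  have h1 : (A * Dm * Nm⁻¹ * A) k k = ((A * Dm * Nm⁻¹ * A)ᵀ) k k := rfl
  rw [h1]
  have h2 : (A * Dm * Nm⁻¹ * A)ᵀ = A * ((Nm)ᵀ)⁻¹ * Dm * A := by
    rw [Matrix.transpose_mul, Matrix.transpose_mul, Matrix.transpose_mul,
      Matrix.diagonal_transpose, hA, Matrix.transpose_nonsing_inv]
    simp [Matrix.mul_assoc]
  rw [h2, hpush]
  simp [Matrix.mul_assoc]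

lemma entry_div (hw0 : ∀ i, 0 < w0 i) (X : Matrix (Fin m) (Fin m) ℝ) :
    (X * (A * Dm * A)) k k = (X * Bm) k k / w0 k := by
  have h1 : X * Bm = (X * (A * Dm * A)) * Dm := by simp [Matrix.mul_assoc]
  rw [h1, Matrix.mul_diagonal]
  field_simp [(hw0 k).ne']

lemma trace_formula (hA : A.IsSymm) (hw0 : ∀ i, 0 < w0 i) (hdet : IsUnit (Nm).det) :
    (Nm⁻¹ * (A * Em * A * Dm + A * Dm * A * Em)).trace
      = 2 * ((Bm * Nm⁻¹) k k) / w0 k := by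
  rw [Matrix.mul_add, Matrix.trace_add]
  have term2 : (Nm⁻¹ * (A * Dm * A * Em)).trace = (Nm⁻¹ * (A * Dm * A)) k k := by
    rw [show Nm⁻¹ * (A * Dm * A * Em) = (Nm⁻¹ * (A * Dm * A)) * Em by
      simp [Matrix.mul_assoc]]
    exact trace_mul_single k _
  have term1 : (Nm⁻¹ * (A * Em * A * Dm)).trace = (Nm⁻¹ * (A * Dm * A)) k k := by
    rw [show Nm⁻¹ * (A * Em * A * Dm) = ((Nm⁻¹ * A) * Em) * (A * Dm) by
      simp [Matrix.mul_assoc]]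
    rw [Matrix.trace_mul_comm]
    rw [show (A * Dm) * ((Nm⁻¹ * A) * Em) = ((A * Dm) * (Nm⁻¹ * A)) * Em by
      simp [Matrix.mul_assoc]]
    rw [trace_mul_single k _]
    have := key_entry A w0 k hA hdet
    rw [show (A * Dm) * (Nm⁻¹ * A) = A * Dm * Nm⁻¹ * A by simp [Matrix.mul_assoc], this]
  rw [term1, term2, entry_div A w0 k hw0, ← NB_comm A w0 hdet]
  ring

end alg


lemma diagonal_update {m : ℕ} (w0 : Fin m → ℝ) (k : Fin m) (t : ℝ) :
    Matrix.diagonal (Function.update w0 k t)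
      = Matrix.diagonal w0 + (t - w0 k) • Matrix.single k k (1:ℝ) := by
  ext i j
  rcases eq_or_ne i j with rfl | hij
  · rcases eq_or_ne i k with rfl | hik
    · simp [Matrix.single, Matrix.diagonal_apply]
    · simp [Matrix.single, Matrix.diagonal_apply, Function.update_apply, hik,
        (Ne.symm hik)]
  · simp [Matrix.diagonal_apply, hij, Matrix.single]
    rintro rfl rfl
    exact (hij rfl).elim

lemma family_expand {m : ℕ} (A : Matrix (Fin m) (Fin m) ℝ) (w0 : Fin m → ℝ) (k : Fin m)
    (t : ℝ) :
    1 - A * Matrix.diagonal (Function.update w0 k t) * A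
        * Matrix.diagonal (Function.update w0 k t)
      = (1 - A * Matrix.diagonal w0 * A * Matrix.diagonal w0)
        - (t - w0 k) • (A * Matrix.single k k (1:ℝ) * A * Matrix.diagonal w0
            + A * Matrix.diagonal w0 * A * Matrix.single k k (1:ℝ))
        - ((t - w0 k)^2) • (A * Matrix.single k k (1:ℝ) * A
            * Matrix.single k k (1:ℝ)) := by
  rw [diagonal_update]
  simp only [Matrix.mul_add, Matrix.add_mul, Matrix.mul_smul, Matrix.smul_mul, smul_add,
    smul_smul, pow_two]
  module

section navgconj
variable {m : ℕ} (A : Matrix (Fin m) (Fin m) ℝ) (w0 : Fin m → ℝ)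

local notation "Wd" => Matrix.diagonal (fun i => Real.sqrt (w0 i))
local notation "Wd'" => Matrix.diagonal (fun i => (Real.sqrt (w0 i))⁻¹)
local notation "Dm" => Matrix.diagonal w0
local notation "Bm" => A * Matrix.diagonal w0 * A * Matrix.diagonal w0
local notation "Nm" => 1 - A * Matrix.diagonal w0 * A * Matrix.diagonal w0

lemma navg_conj (hw0 : ∀ i, 0 < w0 i) (hNu : IsUnit (Nm).det) (k : Fin m) :
    (WAW A w0 ^ 2 * (1 - WAW A w0 ^ 2)⁻¹ : Matrix (Fin m) (Fin m) ℝ) k k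
      = (Bm * Nm⁻¹) k k := by
  have hinv : (1 - WAW A w0 ^ 2)⁻¹ = Wd * Nm⁻¹ * Wd' := by
    apply Matrix.inv_eq_right_inv
    rw [one_sub_WAW_sq A w0 hw0]
    calc (Wd * Nm * Wd') * (Wd * Nm⁻¹ * Wd')
        = Wd * (Nm * ((Wd' * Wd) * (Nm⁻¹ * Wd'))) := by simp only [Matrix.mul_assoc]
      _ = Wd * (Nm * Nm⁻¹) * Wd' := by
          rw [Wd'Wd w0 hw0, Matrix.one_mul]; simp only [Matrix.mul_assoc]
      _ = 1 := by rw [Matrix.mul_nonsing_inv _ hNu, Matrix.mul_one, WdWd' w0 hw0]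
  rw [hinv, WAW_sq_conj A w0 hw0]
  have hprod : (Wd * (Bm) * Wd') * (Wd * Nm⁻¹ * Wd') = Wd * (Bm * Nm⁻¹) * Wd' := by
    calc (Wd * Bm * Wd') * (Wd * Nm⁻¹ * Wd')
        = Wd * (Bm * ((Wd' * Wd) * (Nm⁻¹ * Wd'))) := by simp only [Matrix.mul_assoc]
      _ = Wd * (Bm * Nm⁻¹) * Wd' := by
          rw [Wd'Wd w0 hw0, Matrix.one_mul]; simp only [Matrix.mul_assoc]
  rw [hprod, Matrix.mul_diagonal, Matrix.diagonal_mul]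
  rw [mul_comm (Real.sqrt (w0 k)) _, mul_inv_cancel_right₀ (sqrt_ne w0 hw0 k)]

lemma hasDerivAt_q (k : Fin m) (hNu : IsUnit (Nm).det) :
    HasDerivAt (fun t => (1 - A * Matrix.diagonal (Function.update w0 k t) * A
        * Matrix.diagonal (Function.update w0 k t)).det)
      (-((Nm).det * ((Nm⁻¹ * (A * Matrix.single k k (1:ℝ) * A * Dm
          + A * Dm * A * Matrix.single k k (1:ℝ))).trace))) (w0 k) := by
  set t0 := w0 k with ht0
  set C1 := A * Matrix.single k k (1:ℝ) * A * Dm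
      + A * Dm * A * Matrix.single k k (1:ℝ) with hC1
  set C2 := A * Matrix.single k k (1:ℝ) * A * Matrix.single k k (1:ℝ) with hC2
  have key := hasDerivAt_det_aux
    (fun t => 1 - A * Matrix.diagonal (Function.update w0 k t) * A
        * Matrix.diagonal (Function.update w0 k t)) (-C1) t0 ?_
  · have hupd : Function.update w0 k t0 = w0 := Function.update_eq_self k w0
    have hval : (Matrix.adjugate (1 - A * Matrix.diagonal (Function.update w0 k t0) * A
        * Matrix.diagonal (Function.update w0 k t0)) * (-C1)).trace
        = -((Nm).det * ((Nm⁻¹ * C1).trace)) := by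
      rw [hupd]
      have hadj : Matrix.adjugate (Nm) * C1 = (Nm).det • ((Nm)⁻¹ * C1) := by
        have hstep : Nm * ((Nm)⁻¹ * C1) = C1 := by
          rw [← Matrix.mul_assoc, Matrix.mul_nonsing_inv _ hNu, Matrix.one_mul]
        calc Matrix.adjugate (Nm) * C1
            = Matrix.adjugate (Nm) * (Nm * ((Nm)⁻¹ * C1)) := by rw [hstep]
          _ = (Matrix.adjugate (Nm) * Nm) * ((Nm)⁻¹ * C1) := (Matrix.mul_assoc _ _ _).symm
          _ = (Nm).det • ((Nm)⁻¹ * C1) := by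
              rw [Matrix.adjugate_mul, Matrix.smul_mul, Matrix.one_mul]
      rw [Matrix.mul_neg, Matrix.trace_neg, hadj, Matrix.trace_smul, smul_eq_mul]
    rw [hval] at key
    exact key
  · intro i j
    have hf : ∀ t, (1 - A * Matrix.diagonal (Function.update w0 k t) * A
        * Matrix.diagonal (Function.update w0 k t)) i j
        = (Nm) i j - (t - t0) * C1 i j - (t - t0)^2 * C2 i j := by
      intro t
      rw [family_expand A w0 k t, ← hC1, ← hC2, ← ht0]
      simp only [Matrix.sub_apply, Matrix.smul_apply, smul_eq_mul]
    have hb : HasDerivAt (fun t : ℝ => t - t0) 1 t0 := (hasDerivAt_id t0).sub_const t0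
    have h1 : HasDerivAt (fun t : ℝ => (t - t0) * C1 i j) (1 * C1 i j) t0 :=
      hb.mul_const (C1 i j)
    have h2 : HasDerivAt (fun t : ℝ => (t - t0)^2 * C2 i j)
        ((↑2 * (t0 - t0) ^ (2 - 1) * 1) * C2 i j) t0 := (hb.pow 2).mul_const (C2 i j)
    have h3 := ((hasDerivAt_const t0 ((Nm) i j)).sub h1).sub h2
    have h4 : HasDerivAt (fun t => (1 - A * Matrix.diagonal (Function.update w0 k t) * A
        * Matrix.diagonal (Function.update w0 k t)) i j)
        (0 - 1 * C1 i j - (↑2 * (t0 - t0) ^ (2 - 1) * 1) * C2 i j) t0 := by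
      simp only [hf]
      exact h3
    convert h4 using 1
    simp [Matrix.neg_apply]
end navgconj

lemma final_algebra (s H Pr c t0 a : ℝ) (nk : ℕ) (hs : 0 < s) (ht0 : t0 ≠ 0) (hc : c ≠ 0) :
    -(s * s * (2 * a / t0)) / (2 * s) * H * (t0 ^ nk / c * Pr)
      + s * H * ((nk : ℝ) * t0 ^ (nk - 1) / c * Pr)
      = (((nk : ℝ) - a) / t0) * (s * H * (t0 ^ nk / c * Pr)) := by
  have hpw : (nk : ℝ) * t0 ^ (nk - 1) = (nk : ℝ) * t0 ^ nk / t0 := by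
    cases nk with
    | zero => simp
    | succ p => rw [Nat.succ_sub_one, eq_div_iff ht0, mul_assoc, ← pow_succ]
  rw [hpw]
  field_simp
  ring

lemma Pgbs_split {m : ℕ} (A : Matrix (Fin m) (Fin m) ℝ) (n : Fin m → ℕ) (w : Fin m → ℝ)
    (hw : ∀ i, 0 < w i) (k : Fin m) :
    Pgbs A n w = Real.sqrt ((1 - A * Matrix.diagonal w * A * Matrix.diagonal w).det)
      * hafnian (repMat A n) ^ 2
      * ((w k ^ n k / (Nat.factorial (n k) : ℝ))
          * ∏ i ∈ Finset.univ.erase k, (w i ^ n i / (Nat.factorial (n i) : ℝ))) := by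
  simp only [Pgbs]
  rw [det_conj A w hw, ← Finset.mul_prod_erase Finset.univ _ (Finset.mem_univ k)]


/-- in the WAW parametrization with fixed symmetric `A`, `w⁰ ∈ (0,∞)^m` and
`‖A_{W(w⁰)}‖ < 1` (L2 operator norm), the partial derivative `∂P/∂w_k` of the GBS probability
at `w⁰` exists and equals `((n_k − ⟨n_k⟩)/w⁰_k) · P(w⁰, n̄)`. -/
theorem hasDerivAt_Pgbs_weight {m : ℕ} (A : Matrix (Fin m) (Fin m) ℝ) (hA : A.IsSymm)
    (w0 : Fin m → ℝ) (hw0 : ∀ i, 0 < w0 i) (hnorm : ‖WAW A w0‖ < 1)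
    (n : Fin m → ℕ) (k : Fin m) :
    HasDerivAt (fun t => Pgbs A n (Function.update w0 k t))
      ((((n k : ℝ) - navg A w0 k) / w0 k) * Pgbs A n w0) (w0 k) := by
  classical
  have hposd := posdef_one_sub_sq A hA w0 hnorm
  have hdet1 : 0 < (1 - WAW A w0 ^ 2).det := hposd.det_pos
  have hdetN : 0 < (1 - A * Matrix.diagonal w0 * A * Matrix.diagonal w0).det := by
    rw [← det_conj A w0 hw0]; exact hdet1
  have hNu : IsUnit (1 - A * Matrix.diagonal w0 * A * Matrix.diagonal w0).det :=
    isUnit_iff_ne_zero.2 hdetN.ne'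
  have hnavg : navg A w0 k = ((A * Matrix.diagonal w0 * A * Matrix.diagonal w0)
      * (1 - A * Matrix.diagonal w0 * A * Matrix.diagonal w0)⁻¹) k k := by
    rw [navg]; exact navg_conj A w0 hw0 hNu k
  have hcne : (Nat.factorial (n k) : ℝ) ≠ 0 := Nat.cast_ne_zero.2 (Nat.factorial_ne_zero _)
  have ht0ne : w0 k ≠ 0 := (hw0 k).ne'
  -- derivative of the determinant factor
  have hq0 := hasDerivAt_q A w0 k hNu
  rw [trace_formula A w0 k hA hw0 hNu, ← hnavg] at hq0
  have hqt0 : (1 - A * Matrix.diagonal (Function.update w0 k (w0 k)) * A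
      * Matrix.diagonal (Function.update w0 k (w0 k))).det
      = (1 - A * Matrix.diagonal w0 * A * Matrix.diagonal w0).det := by
    rw [Function.update_eq_self]
  have hsq := hq0.sqrt (by rw [hqt0]; exact hdetN.ne')
  rw [hqt0] at hsq
  have hf1 := hsq.mul_const (hafnian (repMat A n) ^ 2)
  have hf2 := ((hasDerivAt_pow (n k) (w0 k)).div_const (Nat.factorial (n k) : ℝ)).mul_const
    (∏ i ∈ Finset.univ.erase k, (w0 i ^ n i / (Nat.factorial (n i) : ℝ)))
  have hG := hf1.mul hf2
  -- eventual equality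
  have hev : (fun t => Pgbs A n (Function.update w0 k t)) =ᶠ[nhds (w0 k)]
      (fun t => Real.sqrt ((1 - A * Matrix.diagonal (Function.update w0 k t) * A
          * Matrix.diagonal (Function.update w0 k t)).det)
        * hafnian (repMat A n) ^ 2
        * (t ^ n k / (Nat.factorial (n k) : ℝ)
            * ∏ i ∈ Finset.univ.erase k, (w0 i ^ n i / (Nat.factorial (n i) : ℝ)))) := by
    filter_upwards [eventually_gt_nhds (hw0 k)] with t ht
    have hwt : ∀ i, 0 < Function.update w0 k t i := by
      intro i
      rcases eq_or_ne i k with rfl | h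
      · rw [Function.update_self]; exact ht
      · rw [Function.update_of_ne h]; exact hw0 i
    rw [Pgbs_split A n _ hwt k, Function.update_self]
    have hprod : ∏ i ∈ Finset.univ.erase k,
        ((Function.update w0 k t i) ^ n i / (Nat.factorial (n i) : ℝ))
        = ∏ i ∈ Finset.univ.erase k, (w0 i ^ n i / (Nat.factorial (n i) : ℝ)) :=
      Finset.prod_congr rfl fun i hi => by
        rw [Function.update_of_ne (Finset.mem_erase.1 hi).1]
    rw [hprod]
  have hfin := hG.congr_of_eventuallyEq hev
  have hPg : Pgbs A n w0
      = Real.sqrt ((1 - A * Matrix.diagonal w0 * A * Matrix.diagonal w0).det)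
        * hafnian (repMat A n) ^ 2
        * (w0 k ^ n k / (Nat.factorial (n k) : ℝ)
            * ∏ i ∈ Finset.univ.erase k, (w0 i ^ n i / (Nat.factorial (n i) : ℝ))) :=
    Pgbs_split A n w0 hw0 k
  refine hfin.congr_deriv (Eq.symm ?_)
  simp only [hqt0]
  rw [hPg]
  set s := Real.sqrt ((1 - A * Matrix.diagonal w0 * A * Matrix.diagonal w0).det) with hs
  have hspos : 0 < s := Real.sqrt_pos.2 hdetN
  have hss : (1 - A * Matrix.diagonal w0 * A * Matrix.diagonal w0).det = s * s := by
    rw [hs]; exact (Real.mul_self_sqrt hdetN.le).symm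
  rw [hss]
  exact (final_algebra s (hafnian (repMat A n) ^ 2)
    (∏ i ∈ Finset.univ.erase k, (w0 i ^ n i / (Nat.factorial (n i) : ℝ)))
    (Nat.factorial (n k) : ℝ) (w0 k) (navg A w0 k) (n k) hspos ht0ne hcne).symm
end

section
/- Let A be a fixed real symmetric m×m matrix, let f^{(1)},…,f^{(m)} ∈ ℝ^d, and for θ ∈ ℝ^d define w_k(θ) = exp(−θᵀ f^{(k)}), W(θ) = diag(√w_1(θ),…,√w_m(θ)), and A_W = W(θ) A W(θ). Suppose at θ₀ ∈ ℝ^d the operator norm of A_{W(θ₀)} is strictly less than 1. For n̄ ∈ ℕ^m define P(θ, n̄) = (det(I − A_W²))^{1/2} · Haf(A_{n̄})² · ∏_{i=1}^m w_i(θ)^{n_i}/n_i!. Then for each j ∈ {1,…,d}, the partial derivative ∂P/∂θ_j at θ₀ exists and equals −Σ_{k=1}^m (n_k − ⟨n_k⟩) f^{(k)}_j · P(θ₀, n̄), where ⟨n_k⟩ := (A_W² (I − A_W²)^{-1})_{kk} evaluated at θ₀. -/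
open Finset Matrix
open scoped Matrix.Norms.L2Operator

/-- The reparametrized weights `w_k(θ) = exp(−θᵀ f^{(k)})`. -/
noncomputable def wexp {m d : ℕ} (f : Fin m → Fin d → ℝ) (θ : Fin d → ℝ) :
    Fin m → ℝ := fun k => Real.exp (-(∑ l, θ l * f k l))

/-- Derivative of the determinant of a matrix-valued function of a real variable
(Jacobi's formula). -/
private lemma hasDerivAt_det_aux_s9 {m : ℕ} {M : ℝ → Matrix (Fin m) (Fin m) ℝ}
    {M₀ M' : Matrix (Fin m) (Fin m) ℝ} {t₀ : ℝ} (hM₀ : M t₀ = M₀)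
    (h : ∀ a b, HasDerivAt (fun t => M t a b) (M' a b) t₀) :
    HasDerivAt (fun t => (M t).det) ((M₀.adjugate * M').trace) t₀ := by
  classical
  subst hM₀
  have hcongr : (fun t => (M t).det)
      = fun t => ∑ σ : Equiv.Perm (Fin m),
          ((Equiv.Perm.sign σ : ℤ) : ℝ) * ∏ i, M t (σ i) i := by
    funext t; exact Matrix.det_apply' (M t)
  rw [hcongr]
  have key : HasDerivAt (fun t => ∑ σ : Equiv.Perm (Fin m),
      ((Equiv.Perm.sign σ : ℤ) : ℝ) * ∏ i, M t (σ i) i)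
      (∑ σ : Equiv.Perm (Fin m), ((Equiv.Perm.sign σ : ℤ) : ℝ) *
        ∑ i, (∏ i' ∈ Finset.univ.erase i, M t₀ (σ i') i') * M' (σ i) i) t₀ := by
    apply HasDerivAt.fun_sum
    intro σ _
    have hp := HasDerivAt.finset_prod (u := Finset.univ)
      (f := fun i t => M t (σ i) i) (f' := fun i => M' (σ i) i) (x := t₀)
      (fun i _ => h (σ i) i)
    simpa [smul_eq_mul] using hp.const_mul (((Equiv.Perm.sign σ : ℤ) : ℝ))
  convert key using 1
  have step1 : ∀ i : Fin m, ((M t₀).adjugate * M') i i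
      = ∑ σ : Equiv.Perm (Fin m), ((Equiv.Perm.sign σ : ℤ) : ℝ) *
          ((∏ i' ∈ Finset.univ.erase i, M t₀ (σ i') i') * M' (σ i) i) := by
    intro i
    have h1 : ((M t₀).adjugate * M') i i
        = Matrix.cramer (M t₀) (fun r => M' r i) i := by
      rw [Matrix.cramer_eq_adjugate_mulVec]
      simp [Matrix.mul_apply, Matrix.mulVec, dotProduct]
    rw [h1, Matrix.cramer_apply, Matrix.det_apply']
    refine Finset.sum_congr rfl (fun σ _ => ?_)
    congr 1
    rw [← Finset.mul_prod_erase Finset.univ _ (Finset.mem_univ i),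
      Matrix.updateCol_self]
    rw [Finset.prod_congr rfl (fun i' hi' =>
      Matrix.updateCol_ne (Finset.ne_of_mem_erase hi'))]
    ring
  calc ((M t₀).adjugate * M').trace
      = ∑ i, ((M t₀).adjugate * M') i i := by simp [Matrix.trace, Matrix.diag]
    _ = ∑ i, ∑ σ : Equiv.Perm (Fin m), ((Equiv.Perm.sign σ : ℤ) : ℝ) *
          ((∏ i' ∈ Finset.univ.erase i, M t₀ (σ i') i') * M' (σ i) i) :=
        Finset.sum_congr rfl (fun i _ => step1 i)
    _ = ∑ σ : Equiv.Perm (Fin m), ∑ i, ((Equiv.Perm.sign σ : ℤ) : ℝ) *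
          ((∏ i' ∈ Finset.univ.erase i, M t₀ (σ i') i') * M' (σ i) i) :=
        Finset.sum_comm
    _ = ∑ σ : Equiv.Perm (Fin m), ((Equiv.Perm.sign σ : ℤ) : ℝ) *
          ∑ i, (∏ i' ∈ Finset.univ.erase i, M t₀ (σ i') i') * M' (σ i) i :=
        Finset.sum_congr rfl (fun σ _ => (Finset.mul_sum _ _ _).symm)

/-- with weights `w_k(θ) = exp(−θᵀ f^{(k)})` and `‖A_{W(θ₀)}‖ < 1`
(L2 operator norm), the partial derivative `∂P/∂θ_j` of the GBS probability at `θ₀` exists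
and equals `−Σ_k (n_k − ⟨n_k⟩) f^{(k)}_j · P(θ₀, n̄)`. -/
theorem hasDerivAt_Pgbs_theta {m d : ℕ} (A : Matrix (Fin m) (Fin m) ℝ) (hA : A.IsSymm)
    (f : Fin m → Fin d → ℝ) (θ₀ : Fin d → ℝ)
    (hnorm : ‖WAW A (wexp f θ₀)‖ < 1)
    (n : Fin m → ℕ) (j : Fin d) :
    HasDerivAt (fun t => Pgbs A n (wexp f (Function.update θ₀ j t)))
      (-(∑ k, ((n k : ℝ) - navg A (wexp f θ₀) k) * f k j) * Pgbs A n (wexp f θ₀))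
      (θ₀ j) := by
  classical
  have hupd : Function.update θ₀ j (θ₀ j) = θ₀ := Function.update_eq_self j θ₀
  set t₀ := θ₀ j with ht₀def
  set w₀ : Fin m → ℝ := wexp f θ₀ with hw₀def
  set φ : Fin m → ℝ := fun k => f k j with hφdef
  set G : Matrix (Fin m) (Fin m) ℝ := WAW A w₀ with hGdef
  set Φ : Matrix (Fin m) (Fin m) ℝ := Matrix.diagonal φ with hΦdef
  set B₀ : Matrix (Fin m) (Fin m) ℝ := G ^ 2 with hB₀def
  set M₀ : Matrix (Fin m) (Fin m) ℝ := 1 - B₀ with hM₀def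
  have hval : wexp f (Function.update θ₀ j t₀) = w₀ := by rw [hupd, hw₀def]
  have hw₀pos : ∀ k, 0 < w₀ k := by
    intro k; rw [hw₀def]; simp only [wexp]; exact Real.exp_pos _
  -- the path of weights
  have hw : ∀ t k, wexp f (Function.update θ₀ j t) k
      = w₀ k * Real.exp (-((t - t₀) * φ k)) := by
    intro t k
    rw [hw₀def]
    simp only [wexp]
    rw [← Real.exp_add]
    congr 1
    have hterm : ∀ l, Function.update θ₀ j t l * f k l
        = θ₀ l * f k l + (if l = j then (t - t₀) * f k j else 0) := by
      intro l
      rcases eq_or_ne l j with rfl | hl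
      · rw [Function.update_self, if_pos rfl, ht₀def]; ring
      · rw [Function.update_of_ne hl, if_neg hl, add_zero]
    rw [Finset.sum_congr rfl (fun l _ => hterm l), Finset.sum_add_distrib,
      Finset.sum_ite_eq' Finset.univ j, if_pos (Finset.mem_univ j)]
    simp only [hφdef]
    ring
  have hsqrtw : ∀ t k, Real.sqrt (wexp f (Function.update θ₀ j t) k)
      = Real.sqrt (w₀ k) * Real.exp (-((t - t₀) * φ k) / 2) := by
    intro t k
    rw [hw t k, Real.sqrt_mul (hw₀pos k).le, Real.exp_half]
  -- entries of WAW
  have hWAWapp : ∀ (v : Fin m → ℝ) (a b : Fin m),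
      WAW A v a b = Real.sqrt (v a) * A a b * Real.sqrt (v b) := by
    intro v a b
    rw [WAW, Matrix.mul_diagonal, Matrix.diagonal_mul]
  -- general exponential derivative pattern
  have hexp : ∀ (C c : ℝ), HasDerivAt (fun t => C * Real.exp (-((t - t₀) * c)))
      (C * -c) t₀ := by
    intro C c
    have h1 : HasDerivAt (fun t : ℝ => -((t - t₀) * c)) (-c) t₀ := by
      simpa using (((hasDerivAt_id t₀).sub_const t₀).mul_const c).fun_neg
    have h2 := h1.exp.const_mul C
    simpa using h2
  -- derivative of the entries of WAW along the path
  set Gd : Matrix (Fin m) (Fin m) ℝ :=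
    Matrix.of (fun a b => -((φ a + φ b) / 2) * G a b) with hGddef
  have hg : ∀ a b : Fin m, HasDerivAt
      (fun t => WAW A (wexp f (Function.update θ₀ j t)) a b) (Gd a b) t₀ := by
    intro a b
    have hfun : (fun t => WAW A (wexp f (Function.update θ₀ j t)) a b)
        = fun t => (Real.sqrt (w₀ a) * A a b * Real.sqrt (w₀ b))
            * Real.exp (-((t - t₀) * ((φ a + φ b) / 2))) := by
      funext t
      rw [hWAWapp (wexp f (Function.update θ₀ j t)) a b, hsqrtw, hsqrtw,
        show -((t - t₀) * ((φ a + φ b) / 2))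
          = -((t - t₀) * φ a) / 2 + -((t - t₀) * φ b) / 2 by ring,
        Real.exp_add]
      ring
    rw [hfun]
    have h2 := hexp (Real.sqrt (w₀ a) * A a b * Real.sqrt (w₀ b)) ((φ a + φ b) / 2)
    have hGab : G a b = Real.sqrt (w₀ a) * A a b * Real.sqrt (w₀ b) := by
      rw [hGdef, hWAWapp]
    have : Gd a b = (Real.sqrt (w₀ a) * A a b * Real.sqrt (w₀ b)) * -((φ a + φ b) / 2) := by
      rw [hGddef, Matrix.of_apply, hGab]; ring
    rw [this]
    exact h2
  -- derivative of the entries of (WAW)^2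
  have hB : ∀ a b : Fin m, HasDerivAt
      (fun t => (WAW A (wexp f (Function.update θ₀ j t)) ^ 2) a b)
      ((Gd * G + G * Gd) a b) t₀ := by
    intro a b
    have hfun : (fun t => (WAW A (wexp f (Function.update θ₀ j t)) ^ 2) a b)
        = fun t => ∑ c, WAW A (wexp f (Function.update θ₀ j t)) a c
            * WAW A (wexp f (Function.update θ₀ j t)) c b := by
      funext t; rw [pow_two, Matrix.mul_apply]
    rw [hfun]
    have hs : HasDerivAt (fun t => ∑ c, WAW A (wexp f (Function.update θ₀ j t)) a c
          * WAW A (wexp f (Function.update θ₀ j t)) c b)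
        (∑ c, (Gd a c * G c b + G a c * Gd c b)) t₀ :=
      HasDerivAt.fun_sum (fun c _ => by
        simpa [hval, ← hGdef] using (hg a c).fun_mul (hg c b))
    convert hs using 1
    simp [Matrix.add_apply, Matrix.mul_apply, Finset.sum_add_distrib]
  -- derivative of the entries of 1 - (WAW)^2
  set Mp : Matrix (Fin m) (Fin m) ℝ := -(Gd * G + G * Gd) with hMpdef
  have hMder : ∀ a b : Fin m, HasDerivAt
      (fun t => ((1 - WAW A (wexp f (Function.update θ₀ j t)) ^ 2 : Matrix (Fin m) (Fin m) ℝ) a b))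
      (Mp a b) t₀ := by
    intro a b
    have h1 := (hB a b).const_sub ((1 : Matrix (Fin m) (Fin m) ℝ) a b)
    have hfun : (fun t => ((1 - WAW A (wexp f (Function.update θ₀ j t)) ^ 2 : Matrix (Fin m) (Fin m) ℝ) a b))
        = fun t => (1 : Matrix (Fin m) (Fin m) ℝ) a b
            - (WAW A (wexp f (Function.update θ₀ j t)) ^ 2) a b := by
      funext t; rw [Matrix.sub_apply]
    rw [hfun, hMpdef]
    simpa [Matrix.neg_apply] using h1
  have hM₀t : (1 - WAW A (wexp f (Function.update θ₀ j t₀)) ^ 2) = M₀ := by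
    rw [hval, ← hGdef, ← hB₀def, hM₀def]
  -- derivative of the determinant
  have hDder : HasDerivAt
      (fun t => (1 - WAW A (wexp f (Function.update θ₀ j t)) ^ 2).det)
      ((M₀.adjugate * Mp).trace) t₀ := hasDerivAt_det_aux_s9 hM₀t hMder
  -- positivity of the determinant
  have hGsym : Gᵀ = G := by
    rw [hGdef, WAW, Matrix.transpose_mul, Matrix.transpose_mul,
      Matrix.diagonal_transpose, hA.eq, Matrix.mul_assoc]
  have hdot : ∀ z : Fin m → ℝ, z ⬝ᵥ z
      = ‖(EuclideanSpace.equiv (Fin m) ℝ).symm z‖ ^ 2 := by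
    intro z
    rw [EuclideanSpace.norm_eq, Real.sq_sqrt (by positivity)]
    simp [dotProduct, Real.norm_eq_abs, sq_abs, pow_two]
  have hpos : M₀.PosDef := by
    refine Matrix.posDef_iff_dotProduct_mulVec.mpr ⟨?_, ?_⟩
    · rw [Matrix.IsHermitian, Matrix.conjTranspose_eq_transpose_of_trivial,
        hM₀def, hB₀def, Matrix.transpose_sub, Matrix.transpose_one,
        Matrix.transpose_pow, hGsym]
    · intro x hx
      have hstar : star x = x := by simp
      rw [hstar, hM₀def, Matrix.sub_mulVec, Matrix.one_mulVec, dotProduct_sub]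
      have hBx : B₀ *ᵥ x = G *ᵥ (G *ᵥ x) := by
        rw [hB₀def, pow_two, ← Matrix.mulVec_mulVec]
      rw [hBx, Matrix.dotProduct_mulVec, show x ᵥ* G = G *ᵥ x by
        rw [← Matrix.vecMul_transpose, hGsym]]
      have h1 := G.l2_opNorm_mulVec ((EuclideanSpace.equiv (Fin m) ℝ).symm x)
      have hxnorm : 0 < ‖(EuclideanSpace.equiv (Fin m) ℝ).symm x‖ := by
        rw [norm_pos_iff]
        simpa using hx
      have hGnn : (0 : ℝ) ≤ ‖G‖ := norm_nonneg _
      have hGxnn : (0 : ℝ) ≤ ‖(EuclideanSpace.equiv (Fin m) ℝ).symm (G *ᵥ x)‖ :=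
        norm_nonneg _
      have h1' : ‖(EuclideanSpace.equiv (Fin m) ℝ).symm (G *ᵥ x)‖
          ≤ ‖G‖ * ‖(EuclideanSpace.equiv (Fin m) ℝ).symm x‖ := by
        simpa using h1
      rw [sub_pos, hdot, hdot]
      calc ‖(EuclideanSpace.equiv (Fin m) ℝ).symm (G *ᵥ x)‖ ^ 2
          ≤ (‖G‖ * ‖(EuclideanSpace.equiv (Fin m) ℝ).symm x‖) ^ 2 := by
            exact pow_le_pow_left₀ hGxnn h1' 2
        _ < ‖(EuclideanSpace.equiv (Fin m) ℝ).symm x‖ ^ 2 := by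
            rw [mul_pow]
            have h2 : ‖G‖ ^ 2 < 1 := by nlinarith
            have h3 : 0 < ‖(EuclideanSpace.equiv (Fin m) ℝ).symm x‖ ^ 2 := by positivity
            nlinarith
  have hdetpos : 0 < M₀.det := hpos.det_pos
  have hdetne : M₀.det ≠ 0 := ne_of_gt hdetpos
  have hdet_unit : IsUnit M₀.det := isUnit_iff_ne_zero.mpr hdetne
  have hMM : M₀ * M₀⁻¹ = 1 := Matrix.mul_nonsing_inv _ hdet_unit
  have hMM' : M₀⁻¹ * M₀ = 1 := Matrix.nonsing_inv_mul _ hdet_unit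
  -- commutation facts
  have hGM₀ : G * M₀ = M₀ * G := by rw [hM₀def, hB₀def]; noncomm_ring
  have hcomm : M₀⁻¹ * G = G * M₀⁻¹ := by
    calc M₀⁻¹ * G = M₀⁻¹ * G * (M₀ * M₀⁻¹) := by rw [hMM, mul_one]
      _ = M₀⁻¹ * (G * M₀) * M₀⁻¹ := by rw [mul_assoc, mul_assoc, mul_assoc]
      _ = M₀⁻¹ * (M₀ * G) * M₀⁻¹ := by rw [hGM₀]
      _ = (M₀⁻¹ * M₀) * (G * M₀⁻¹) := by rw [mul_assoc, mul_assoc, mul_assoc]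
      _ = G * M₀⁻¹ := by rw [hMM', one_mul]
  have hBM : M₀⁻¹ * B₀ = B₀ * M₀⁻¹ := by
    rw [hB₀def, pow_two, ← mul_assoc, hcomm, mul_assoc, hcomm, ← mul_assoc]
  -- the matrix identity for Mp
  have hGd2 : Gd + Gd = -(Φ * G + G * Φ) := by
    ext a b
    simp only [hGddef, hΦdef, Matrix.add_apply, Matrix.neg_apply, Matrix.of_apply,
      Matrix.diagonal_mul, Matrix.mul_diagonal]
    ring
  have hMp2 : Mp + Mp = (Φ * B₀ + B₀ * Φ) + (G * Φ * G + G * Φ * G) := by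
    have hB2 : B₀ = G * G := by rw [hB₀def]; exact sq G
    have expand : Mp + Mp = -((Gd + Gd) * G + G * (Gd + Gd)) := by
      rw [hMpdef]; noncomm_ring
    rw [expand, hGd2, hB2]
    noncomm_ring
  -- the mean photon numbers
  have htΦ : ((B₀ * M₀⁻¹) * Φ).trace = ∑ k, navg A w₀ k * φ k := by
    rw [hΦdef]
    simp only [Matrix.trace, Matrix.diag, Matrix.mul_diagonal]
    refine Finset.sum_congr rfl (fun k _ => ?_)
    rfl
  -- the trace pieces
  have p1 : (M₀⁻¹ * (Φ * B₀)).trace = ((B₀ * M₀⁻¹) * Φ).trace := by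
    rw [← mul_assoc, Matrix.trace_mul_cycle]
  have p2 : (M₀⁻¹ * (B₀ * Φ)).trace = ((B₀ * M₀⁻¹) * Φ).trace := by
    rw [← mul_assoc, hBM]
  have p3 : (M₀⁻¹ * (G * Φ * G)).trace = ((B₀ * M₀⁻¹) * Φ).trace := by
    have e1 : M₀⁻¹ * (G * Φ * G) = (M₀⁻¹ * (G * Φ)) * G := by
      noncomm_ring
    rw [e1, Matrix.trace_mul_comm]
    have e2 : G * (M₀⁻¹ * (G * Φ)) = (B₀ * M₀⁻¹) * Φ := by
      calc G * (M₀⁻¹ * (G * Φ)) = (G * M₀⁻¹) * (G * Φ) := by noncomm_ring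
        _ = (M₀⁻¹ * G) * (G * Φ) := by rw [hcomm]
        _ = M₀⁻¹ * (G * G) * Φ := by noncomm_ring
        _ = M₀⁻¹ * B₀ * Φ := by rw [hB₀def, pow_two]
        _ = (B₀ * M₀⁻¹) * Φ := by rw [hBM]
    rw [e2]
  -- the trace identity
  have hadj : M₀.adjugate = M₀.det • M₀⁻¹ := by
    rw [Matrix.inv_def, Ring.inverse_eq_inv, smul_smul, mul_inv_cancel₀ hdetne,
      one_smul]
  have key : (M₀⁻¹ * Mp).trace = 2 * ∑ k, navg A w₀ k * φ k := by
    have hd : (M₀⁻¹ * Mp).trace + (M₀⁻¹ * Mp).trace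
        = 4 * ∑ k, navg A w₀ k * φ k := by
      have e : (M₀⁻¹ * Mp).trace + (M₀⁻¹ * Mp).trace
          = (M₀⁻¹ * (Mp + Mp)).trace := by
        rw [Matrix.mul_add, Matrix.trace_add]
      rw [e, hMp2, Matrix.mul_add, Matrix.mul_add, Matrix.mul_add,
        Matrix.trace_add, Matrix.trace_add, Matrix.trace_add, p1, p2, p3, htΦ]
      ring
    linarith
  have htr : (M₀.adjugate * Mp).trace
      = M₀.det * (2 * ∑ k, navg A w₀ k * φ k) := by
    rw [hadj, Matrix.smul_mul, Matrix.trace_smul, smul_eq_mul, key]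
  -- the product factor
  set N : ℝ := ∑ k, (n k : ℝ) * φ k with hNdef
  set Pi0 : ℝ := ∏ i, w₀ i ^ n i / (Nat.factorial (n i) : ℝ) with hPi0def
  have hPieq : ∀ t, (∏ i, wexp f (Function.update θ₀ j t) i ^ n i
        / (Nat.factorial (n i) : ℝ))
      = Pi0 * Real.exp (-((t - t₀) * N)) := by
    intro t
    have hterm : ∀ i, wexp f (Function.update θ₀ j t) i ^ n i
          / (Nat.factorial (n i) : ℝ)
        = (w₀ i ^ n i / (Nat.factorial (n i) : ℝ))
            * Real.exp ((n i : ℝ) * -((t - t₀) * φ i)) := by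
      intro i
      rw [hw t i, mul_pow, ← Real.exp_nat_mul]
      ring
    rw [Finset.prod_congr rfl (fun i _ => hterm i), Finset.prod_mul_distrib,
      ← Real.exp_sum, hPi0def]
    congr 1
    rw [hNdef, Finset.mul_sum, ← Finset.sum_neg_distrib]
    congr 1
    refine Finset.sum_congr rfl (fun i _ => ?_)
    ring
  have hPider : HasDerivAt
      (fun t => ∏ i, wexp f (Function.update θ₀ j t) i ^ n i
        / (Nat.factorial (n i) : ℝ)) (Pi0 * -N) t₀ := by
    have hfun : (fun t => ∏ i, wexp f (Function.update θ₀ j t) i ^ n i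
        / (Nat.factorial (n i) : ℝ)) = fun t => Pi0 * Real.exp (-((t - t₀) * N)) := by
      funext t; exact hPieq t
    rw [hfun]
    exact hexp Pi0 N
  have hPit0 : (∏ i, wexp f (Function.update θ₀ j t₀) i ^ n i
      / (Nat.factorial (n i) : ℝ)) = Pi0 := by
    rw [hPieq t₀]; simp
  -- derivative of the square root factor
  have hDne : (1 - WAW A (wexp f (Function.update θ₀ j t₀)) ^ 2).det ≠ 0 := by
    rw [hM₀t]; exact hdetne
  have hsq := hDder.sqrt hDne
  rw [hM₀t] at hsq
  -- assemble
  have hP := (hsq.mul_const (hafnian (repMat A n) ^ 2)).fun_mul hPider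
  rw [hPit0, hM₀t] at hP
  have hPfun : (fun t => Pgbs A n (wexp f (Function.update θ₀ j t)))
      = fun t => Real.sqrt ((1 - WAW A (wexp f (Function.update θ₀ j t)) ^ 2).det)
          * hafnian (repMat A n) ^ 2
          * ∏ i, wexp f (Function.update θ₀ j t) i ^ n i
              / (Nat.factorial (n i) : ℝ) := by
    funext t; rw [Pgbs]
  rw [hPfun]
  have hPgbsw₀ : Pgbs A n w₀
      = Real.sqrt M₀.det * hafnian (repMat A n) ^ 2 * Pi0 := by
    rw [Pgbs, hPi0def, hM₀def, hB₀def, hGdef]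
  have hsplit : ∑ k, ((n k : ℝ) - navg A w₀ k) * f k j
      = N - ∑ k, navg A w₀ k * φ k := by
    rw [hNdef, ← Finset.sum_sub_distrib]
    refine Finset.sum_congr rfl (fun k _ => ?_)
    simp only [hφdef]
    ring
  have hfinal : -(∑ k, ((n k : ℝ) - navg A w₀ k) * f k j) * Pgbs A n w₀
      = (M₀.adjugate * Mp).trace / (2 * Real.sqrt M₀.det)
          * hafnian (repMat A n) ^ 2 * Pi0
        + Real.sqrt M₀.det * hafnian (repMat A n) ^ 2 * (Pi0 * -N) := by
    rw [hPgbsw₀, hsplit, htr]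
    have hds : Real.sqrt M₀.det * Real.sqrt M₀.det = M₀.det :=
      Real.mul_self_sqrt hdetpos.le
    have hsne : Real.sqrt M₀.det ≠ 0 := ne_of_gt (Real.sqrt_pos.mpr hdetpos)
    generalize hs : Real.sqrt M₀.det = s at hds hsne ⊢
    rw [← hds]
    field_simp
    ring
  rw [hfinal]
  exact hP
end

section
/- Let A be a fixed real symmetric m×m matrix, and for w ∈ (0,∞)^m let W(w) = diag(√w_1,…,√w_m), A_W = W A W, and P(w, n̄) = (det(I − A_W²))^{1/2} · Haf(A_{n̄})² · ∏_i w_i^{n_i}/n_i! for n̄ ∈ ℕ^m. Let H : ℕ^m → ℝ be a function with finite support, and suppose at w⁰ ∈ (0,∞)^m the operator norm of A_{W(w⁰)} is strictly less than 1. Then the cost C(w) = Σ_{n̄ ∈ supp(H)} H(n̄) P(w, n̄) satisfies, for each k, ∂C/∂w_k at w⁰ equals Σ_{n̄ ∈ supp(H)} H(n̄) · ((n_k − ⟨n_k⟩)/w⁰_k) · P(w⁰, n̄), where ⟨n_k⟩ := (A_W²(I − A_W²)^{-1})_{kk} evaluated at w⁰. -/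
open Finset Matrix
open scoped Matrix.Norms.L2Operator

theorem hasDerivAt_det {m : ℕ} {M : ℝ → Matrix (Fin m) (Fin m) ℝ}
    {M' : Matrix (Fin m) (Fin m) ℝ} {x : ℝ}
    (h : ∀ i j, HasDerivAt (fun t => M t i j) (M' i j) x) :
    HasDerivAt (fun t => (M t).det) (((M x).adjugate * M').trace) x := by
  have key : HasDerivAt (fun t => (M t).det)
      (∑ σ : Equiv.Perm (Fin m), ((Equiv.Perm.sign σ : ℤ) : ℝ) *
        ∑ i, (∏ j ∈ Finset.univ.erase i, M x (σ j) j) * M' (σ i) i) x := by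
    simp only [Matrix.det_apply']
    refine HasDerivAt.fun_sum fun σ _ => ?_
    have hp := HasDerivAt.fun_finsetProd (u := (Finset.univ : Finset (Fin m)))
      (f := fun i t => M t (σ i) i) (f' := fun i => M' (σ i) i) (x := x) (fun i _ => h (σ i) i)
    simpa [smul_eq_mul] using hp.const_mul (((Equiv.Perm.sign σ : ℤ) : ℝ))
  convert key using 1
  -- trace (adj * M') = ∑ σ ...
  have hcol : ∀ i : Fin m, ((M x).updateCol i (fun r => M' r i)).det
      = ∑ σ : Equiv.Perm (Fin m), ((Equiv.Perm.sign σ : ℤ) : ℝ) *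
          ((∏ j ∈ Finset.univ.erase i, M x (σ j) j) * M' (σ i) i) := by
    intro i
    rw [Matrix.det_apply']
    refine Finset.sum_congr rfl fun σ _ => ?_
    congr 1
    rw [← Finset.mul_prod_erase Finset.univ _ (Finset.mem_univ i), mul_comm]
    congr 1
    · exact Finset.prod_congr rfl fun j hj => by
        rw [Matrix.updateCol_apply, if_neg (Finset.mem_erase.mp hj).1]
    · rw [Matrix.updateCol_apply, if_pos rfl]
  have htr : ((M x).adjugate * M').trace = ∑ i, ((M x).updateCol i (fun r => M' r i)).det := by
    simp only [← Matrix.cramer_apply, Matrix.cramer_eq_adjugate_mulVec]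
    simp [Matrix.trace, Matrix.diag, Matrix.mul_apply, Matrix.mulVec, dotProduct]
  rw [htr]
  simp only [hcol]
  rw [Finset.sum_comm]
  refine Finset.sum_congr rfl fun σ _ => ?_
  rw [Finset.mul_sum]


-- positive definiteness of 1 - B^2
theorem posdef_one_sub_sq_s11 {m : ℕ} {B : Matrix (Fin m) (Fin m) ℝ} (hB : B.IsSymm)
    (h : ‖B‖ < 1) : ((1 : Matrix (Fin m) (Fin m) ℝ) - B ^ 2).PosDef := by
  have hdot : ∀ v : Fin m → ℝ, v ⬝ᵥ v = ‖(WithLp.equiv 2 (Fin m → ℝ)).symm v‖ ^ 2 := by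
    intro v
    rw [EuclideanSpace.norm_eq, Real.sq_sqrt (by positivity)]
    simp [dotProduct, sq_abs, pow_two]
  refine Matrix.PosDef.of_dotProduct_mulVec_pos ?_ ?_
  · rw [Matrix.IsHermitian, Matrix.conjTranspose_sub, Matrix.conjTranspose_one]
    have hBH : Bᴴ = B := by
      ext i j
      rw [Matrix.IsSymm] at hB
      simpa [Matrix.conjTranspose_apply] using congrFun (congrFun hB i) j
    rw [pow_two, Matrix.conjTranspose_mul, hBH, ← pow_two]
  · intro x hx
    have hstar : star x = x := by simp
    rw [hstar]
    have hexp : x ⬝ᵥ (((1 : Matrix (Fin m) (Fin m) ℝ) - B ^ 2) *ᵥ x)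
        = x ⬝ᵥ x - (B *ᵥ x) ⬝ᵥ (B *ᵥ x) := by
      rw [Matrix.sub_mulVec, Matrix.one_mulVec, dotProduct_sub]
      congr 1
      rw [pow_two, ← Matrix.mulVec_mulVec, Matrix.dotProduct_mulVec]
      congr 1
      rw [← Matrix.mulVec_transpose, hB.eq]
    rw [hexp]
    have hxnorm : x ⬝ᵥ x = ‖(WithLp.equiv 2 (Fin m → ℝ)).symm x‖ ^ 2 := hdot x
    have hynorm := hdot (B *ᵥ x)
    have hb := Matrix.l2_opNorm_mulVec B ((WithLp.equiv 2 (Fin m → ℝ)).symm x)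
    have hxne : ‖(WithLp.equiv 2 (Fin m → ℝ)).symm x‖ ≠ 0 := by
      simp only [ne_eq, norm_eq_zero]
      intro hz
      apply hx
      have := congrArg (WithLp.equiv 2 (Fin m → ℝ)) hz
      simpa using this
    have hxpos : 0 < ‖(WithLp.equiv 2 (Fin m → ℝ)).symm x‖ :=
      lt_of_le_of_ne (norm_nonneg _) (Ne.symm hxne)
    have hBnn : 0 ≤ ‖B‖ := norm_nonneg _
    have hb' : ‖(WithLp.equiv 2 (Fin m → ℝ)).symm (B *ᵥ x)‖
        ≤ ‖B‖ * ‖(WithLp.equiv 2 (Fin m → ℝ)).symm x‖ := hb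
    have h1 : ‖(WithLp.equiv 2 (Fin m → ℝ)).symm (B *ᵥ x)‖ ^ 2
        ≤ (‖B‖ * ‖(WithLp.equiv 2 (Fin m → ℝ)).symm x‖) ^ 2 :=
      pow_le_pow_left₀ (norm_nonneg _) hb' 2
    have hB2 : ‖B‖ ^ 2 < 1 := by nlinarith
    have h2 : (‖B‖ * ‖(WithLp.equiv 2 (Fin m → ℝ)).symm x‖) ^ 2
        < ‖(WithLp.equiv 2 (Fin m → ℝ)).symm x‖ ^ 2 := by
      have := mul_lt_mul_of_pos_right hB2 (pow_pos hxpos 2)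
      calc (‖B‖ * ‖(WithLp.equiv 2 (Fin m → ℝ)).symm x‖) ^ 2
          = ‖B‖ ^ 2 * ‖(WithLp.equiv 2 (Fin m → ℝ)).symm x‖ ^ 2 := by ring
        _ < 1 * ‖(WithLp.equiv 2 (Fin m → ℝ)).symm x‖ ^ 2 := this
        _ = ‖(WithLp.equiv 2 (Fin m → ℝ)).symm x‖ ^ 2 := one_mul _
    linarith

-- step lemma: derivative of S t = diagonal (sqrt ∘ update w0 k t)
theorem hasDerivAt_S {m : ℕ} (w0 : Fin m → ℝ) (hw0 : ∀ i, 0 < w0 i) (k : Fin m) :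
    HasDerivAt (fun t => Matrix.diagonal (fun i => Real.sqrt (Function.update w0 k t i)))
      ((1 / (2 * Real.sqrt (w0 k))) • Matrix.diagonal (Pi.single k (1:ℝ))) (w0 k) := by
  have funeq : (fun t => Matrix.diagonal (fun i => Real.sqrt (Function.update w0 k t i)))
      = fun t => Matrix.diagonal (fun i => Real.sqrt (w0 i)) +
          (Real.sqrt t - Real.sqrt (w0 k)) • Matrix.diagonal (Pi.single k (1:ℝ)) := by
    funext t
    ext i j
    by_cases hij : i = j
    · subst hij
      by_cases hik : i = k
      · subst hik
        simp [Matrix.diagonal_apply_eq, Matrix.add_apply, Matrix.smul_apply,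
          Pi.single_eq_same, Function.update_self]
      · simp [Matrix.diagonal_apply_eq, Matrix.add_apply, Matrix.smul_apply,
          Pi.single_eq_of_ne hik, Function.update_of_ne hik]
    · simp [Matrix.diagonal_apply_ne _ hij, Matrix.add_apply, Matrix.smul_apply]
  rw [funeq]
  have h1 : HasDerivAt (fun t : ℝ => Real.sqrt t - Real.sqrt (w0 k))
      (1 / (2 * Real.sqrt (w0 k))) (w0 k) :=
    (Real.hasDerivAt_sqrt (ne_of_gt (hw0 k))).sub_const _
  exact (h1.smul_const _).const_add _

theorem hasDerivAt_WAW {m : ℕ} (A : Matrix (Fin m) (Fin m) ℝ) (w0 : Fin m → ℝ)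
    (hw0 : ∀ i, 0 < w0 i) (k : Fin m) :
    HasDerivAt (fun t => WAW A (Function.update w0 k t))
      ((1 / (2 * w0 k)) • (Matrix.diagonal (Pi.single k (1:ℝ)) * WAW A w0 +
        WAW A w0 * Matrix.diagonal (Pi.single k (1:ℝ)))) (w0 k) := by
  set P : Matrix (Fin m) (Fin m) ℝ := Matrix.diagonal (Pi.single k (1:ℝ)) with hP
  set S0 : Matrix (Fin m) (Fin m) ℝ := Matrix.diagonal (fun i => Real.sqrt (w0 i)) with hS0
  have hS := hasDerivAt_S w0 hw0 k
  have hB := (hS.mul_const A).fun_mul hS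
  simp only [Function.update_eq_self] at hB
  have hfun : (fun t => (Matrix.diagonal (fun i => Real.sqrt (Function.update w0 k t i)) * A) *
      Matrix.diagonal (fun i => Real.sqrt (Function.update w0 k t i)))
      = fun t => WAW A (Function.update w0 k t) := rfl
  rw [hfun] at hB
  refine hB.congr_deriv (Eq.symm ?_)
  -- algebra: (1/(2 w0k)) • (P * B0 + B0 * P) = ((1/(2√w0k)) • P * A) * S0 + (S0 * A) * ((1/(2√w0k)) • P)
  have hsq : Real.sqrt (w0 k) * Real.sqrt (w0 k) = w0 k := Real.mul_self_sqrt (hw0 k).le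
  have hsne : Real.sqrt (w0 k) ≠ 0 := ne_of_gt (Real.sqrt_pos.mpr (hw0 k))
  have hPS0 : P * S0 = Real.sqrt (w0 k) • P := by
    rw [hP, hS0, Matrix.diagonal_mul_diagonal]
    ext i j
    by_cases hij : i = j
    · subst hij
      by_cases hik : i = k
      · subst hik; simp
      · simp [Pi.single_eq_of_ne hik]
    · simp [Matrix.diagonal_apply_ne _ hij]
  have hS0P : S0 * P = Real.sqrt (w0 k) • P := by
    rw [hP, hS0, Matrix.diagonal_mul_diagonal]
    ext i j
    by_cases hij : i = j
    · subst hij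
      by_cases hik : i = k
      · subst hik; simp
      · simp [Pi.single_eq_of_ne hik]
    · simp [Matrix.diagonal_apply_ne _ hij]
  have hWAW : WAW A w0 = S0 * A * S0 := rfl
  rw [hWAW]
  have hPB : P * (S0 * A * S0) = Real.sqrt (w0 k) • (P * A * S0) := by
    calc P * (S0 * A * S0) = (P * S0) * A * S0 := by noncomm_ring
      _ = (Real.sqrt (w0 k) • P) * A * S0 := by rw [hPS0]
      _ = Real.sqrt (w0 k) • (P * A * S0) := by
          rw [Matrix.smul_mul, Matrix.smul_mul]
  have hBP : (S0 * A * S0) * P = Real.sqrt (w0 k) • (S0 * A * P) := by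
    calc (S0 * A * S0) * P = S0 * A * (S0 * P) := by noncomm_ring
      _ = S0 * A * (Real.sqrt (w0 k) • P) := by rw [hS0P]
      _ = Real.sqrt (w0 k) • (S0 * A * P) := by rw [Matrix.mul_smul]
  rw [hPB, hBP]
  rw [smul_add, smul_smul, smul_smul]
  have hc : (1 / (2 * w0 k)) * Real.sqrt (w0 k) = 1 / (2 * Real.sqrt (w0 k)) := by
    rw [← hsq]; field_simp; rw [Real.sqrt_sq (Real.sqrt_nonneg _)]
  rw [hc]
  rw [Matrix.smul_mul, Matrix.smul_mul, Matrix.mul_smul]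

theorem hasDerivAt_entry {m : ℕ} {F : ℝ → Matrix (Fin m) (Fin m) ℝ}
    {F' : Matrix (Fin m) (Fin m) ℝ} {x : ℝ}
    (h : HasDerivAt F F' x) (i j : Fin m) :
    HasDerivAt (fun t => F t i j) (F' i j) x := by
  let L : Matrix (Fin m) (Fin m) ℝ →ₗ[ℝ] ℝ :=
    (LinearMap.proj j).comp ((LinearMap.proj i).comp (Matrix.ofLinearEquiv ℝ).symm.toLinearMap)
  have := (L.toContinuousLinearMap.hasFDerivAt (x := F x)).comp_hasDerivAt x h
  exact this

theorem hasDerivAt_sqrtdet {m : ℕ} (A : Matrix (Fin m) (Fin m) ℝ) (hA : A.IsSymm)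
    (w0 : Fin m → ℝ) (hw0 : ∀ i, 0 < w0 i) (hnorm : ‖WAW A w0‖ < 1) (k : Fin m) :
    HasDerivAt (fun t => Real.sqrt ((1 - WAW A (Function.update w0 k t) ^ 2).det))
      (-(navg A w0 k / w0 k) * Real.sqrt ((1 - WAW A w0 ^ 2).det)) (w0 k) := by
  set P : Matrix (Fin m) (Fin m) ℝ := Matrix.diagonal (Pi.single k (1:ℝ)) with hP
  set B0 : Matrix (Fin m) (Fin m) ℝ := WAW A w0 with hB0def
  set M0 : Matrix (Fin m) (Fin m) ℝ := 1 - B0 ^ 2 with hM0def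
  set c : ℝ := 1 / (2 * w0 k) with hc
  set B' : Matrix (Fin m) (Fin m) ℝ := c • (P * B0 + B0 * P) with hB'
  -- symmetry of B0
  have hB0symm : B0.IsSymm := by
    rw [Matrix.IsSymm, hB0def, WAW, Matrix.transpose_mul, Matrix.transpose_mul,
      Matrix.diagonal_transpose, hA.eq, ← Matrix.mul_assoc]
  -- positivity
  have hpos : M0.PosDef := posdef_one_sub_sq_s11 hB0symm hnorm
  have hdetpos : 0 < M0.det := hpos.det_pos
  have hdetunit : IsUnit M0.det := isUnit_iff_ne_zero.mpr hdetpos.ne'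
  have hMinv : M0 * M0⁻¹ = 1 := Matrix.mul_nonsing_inv _ hdetunit
  have hinvM : M0⁻¹ * M0 = 1 := Matrix.nonsing_inv_mul _ hdetunit
  have hcommM : M0 * B0 = B0 * M0 := by rw [hM0def]; noncomm_ring
  have hcomm : B0 * M0⁻¹ = M0⁻¹ * B0 := by
    calc B0 * M0⁻¹ = (M0⁻¹ * M0) * (B0 * M0⁻¹) := by rw [hinvM, one_mul]
      _ = M0⁻¹ * ((M0 * B0) * M0⁻¹) := by noncomm_ring
      _ = M0⁻¹ * ((B0 * M0) * M0⁻¹) := by rw [hcommM]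
      _ = M0⁻¹ * (B0 * (M0 * M0⁻¹)) := by noncomm_ring
      _ = M0⁻¹ * B0 := by rw [hMinv, mul_one]
  have hadj : M0.adjugate = M0.det • M0⁻¹ := by
    rw [Matrix.inv_def, smul_smul, Ring.mul_inverse_cancel _ hdetunit, one_smul]
  -- derivative of the matrix function
  have hB := hasDerivAt_WAW A w0 hw0 k
  have hBsq : HasDerivAt (fun t => WAW A (Function.update w0 k t) ^ 2)
      (B' * B0 + B0 * B') (w0 k) := by
    have h2 := hB.fun_mul hB
    simp only [Function.update_eq_self] at h2
    have : (fun t => WAW A (Function.update w0 k t) * WAW A (Function.update w0 k t))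
        = fun t => WAW A (Function.update w0 k t) ^ 2 := by
      funext t; rw [pow_two]
    rw [this] at h2
    exact h2
  have hM : HasDerivAt (fun t => (1 : Matrix (Fin m) (Fin m) ℝ)
      - WAW A (Function.update w0 k t) ^ 2) (-(B' * B0 + B0 * B')) (w0 k) :=
    hBsq.const_sub 1
  have hdet := hasDerivAt_det (fun i j => hasDerivAt_entry hM i j)
  simp only [Function.update_eq_self] at hdet
  -- value of the trace
  have htrP : ∀ X : Matrix (Fin m) (Fin m) ℝ, (X * P).trace = X k k := by
    intro X
    simp [hP, Matrix.trace, Matrix.diag, Matrix.mul_diagonal, Pi.single_apply]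
  have hXc : B0 * M0⁻¹ * B0 = M0⁻¹ * (B0 * B0) := by
    rw [hcomm, Matrix.mul_assoc]
  have hXc2 : B0 * B0 * M0⁻¹ = M0⁻¹ * (B0 * B0) := by
    rw [Matrix.mul_assoc, hcomm, ← Matrix.mul_assoc, hcomm, Matrix.mul_assoc]
  have t1 : (M0⁻¹ * (P * B0 * B0)).trace = (M0⁻¹ * (B0 * B0)) k k := by
    rw [Matrix.trace_mul_comm]
    rw [show P * B0 * B0 * M0⁻¹ = P * (B0 * B0 * M0⁻¹) by noncomm_ring]
    rw [Matrix.trace_mul_comm, htrP, hXc2]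
  have t2 : (M0⁻¹ * (B0 * P * B0)).trace = (M0⁻¹ * (B0 * B0)) k k := by
    rw [show M0⁻¹ * (B0 * P * B0) = (M0⁻¹ * (B0 * P)) * B0 from by noncomm_ring,
      Matrix.trace_mul_comm,
      show B0 * (M0⁻¹ * (B0 * P)) = (B0 * M0⁻¹ * B0) * P from by noncomm_ring,
      htrP, hXc]
  have t3 : (M0⁻¹ * (B0 * (P * B0))).trace = (M0⁻¹ * (B0 * B0)) k k := by
    rw [show M0⁻¹ * (B0 * (P * B0)) = (M0⁻¹ * (B0 * P)) * B0 from by noncomm_ring,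
      Matrix.trace_mul_comm,
      show B0 * (M0⁻¹ * (B0 * P)) = (B0 * M0⁻¹ * B0) * P from by noncomm_ring,
      htrP, hXc]
  have t4 : (M0⁻¹ * (B0 * B0 * P)).trace = (M0⁻¹ * (B0 * B0)) k k := by
    rw [show M0⁻¹ * (B0 * B0 * P) = M0⁻¹ * (B0 * B0) * P by noncomm_ring, htrP]
  -- assemble the trace
  have hnavg : navg A w0 k = (M0⁻¹ * (B0 * B0)) k k := by
    rw [← hXc2, hM0def, hB0def, navg, pow_two]
  have hexpand : M0.adjugate * -(B' * B0 + B0 * B')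
      = (-(M0.det * c)) • (M0⁻¹ * (P * B0 * B0) + M0⁻¹ * (B0 * P * B0)
          + (M0⁻¹ * (B0 * (P * B0)) + M0⁻¹ * (B0 * B0 * P))) := by
    rw [hadj, hB']
    simp only [Matrix.smul_mul, Matrix.mul_smul, smul_smul, mul_neg, smul_neg, neg_smul,
      ← smul_add]
    rw [show M0⁻¹ * ((P * B0 + B0 * P) * B0 + B0 * (P * B0 + B0 * P))
        = M0⁻¹ * (P * B0 * B0) + M0⁻¹ * (B0 * P * B0)
          + (M0⁻¹ * (B0 * (P * B0)) + M0⁻¹ * (B0 * B0 * P)) from by noncomm_ring,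
      ← neg_smul, mul_comm c M0.det, neg_smul]
  have htrace : (M0.adjugate * -(B' * B0 + B0 * B')).trace
      = -(2 / w0 k * navg A w0 k) * M0.det := by
    rw [hexpand, Matrix.trace_smul, Matrix.trace_add, Matrix.trace_add, Matrix.trace_add,
      t1, t2, t3, t4, ← hnavg]
    rw [hc]
    have : w0 k ≠ 0 := (hw0 k).ne'
    field_simp
    linear_combination (-2 * navg A w0 k * M0.det) * mul_inv_cancel₀ this
  rw [← hB0def, ← hM0def] at hdet
  rw [htrace] at hdet
  -- now the square root
  have hfx : (fun t => ((1:Matrix (Fin m) (Fin m) ℝ)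
      - WAW A (Function.update w0 k t) ^ 2).det) (w0 k) ≠ 0 := by
    simp only [Function.update_eq_self, ← hB0def, ← hM0def]
    exact hdetpos.ne'
  have hsqrt := hdet.sqrt hfx
  simp only [Function.update_eq_self, ← hB0def, ← hM0def] at hsqrt
  have hscal : -(2 / w0 k * navg A w0 k) * M0.det / (2 * Real.sqrt M0.det)
      = -(navg A w0 k / w0 k) * Real.sqrt M0.det := by
    have hd : M0.det = Real.sqrt M0.det * Real.sqrt M0.det :=
      (Real.mul_self_sqrt hdetpos.le).symm
    have hsp : (0:ℝ) < Real.sqrt M0.det := Real.sqrt_pos.mpr hdetpos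
    have hw : w0 k ≠ 0 := (hw0 k).ne'
    have hss := Real.mul_self_sqrt hdetpos.le
    field_simp
    linear_combination navg A w0 k * hss
  rw [hscal] at hsqrt
  exact hsqrt

theorem hasDerivAt_prodterm {m : ℕ} (n : Fin m → ℕ) (w0 : Fin m → ℝ)
    (hw0 : ∀ i, 0 < w0 i) (k : Fin m) :
    HasDerivAt (fun t => ∏ i, (Function.update w0 k t i) ^ n i / (Nat.factorial (n i) : ℝ))
      (((n k : ℝ) / w0 k) * ∏ i, w0 i ^ n i / (Nat.factorial (n i) : ℝ)) (w0 k) := by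
  have funeq : ∀ t : ℝ, (∏ i, (Function.update w0 k t i) ^ n i / (Nat.factorial (n i) : ℝ))
      = (t ^ n k / (Nat.factorial (n k) : ℝ)) *
        ∏ i ∈ Finset.univ.erase k, w0 i ^ n i / (Nat.factorial (n i) : ℝ) := by
    intro t
    rw [← Finset.mul_prod_erase Finset.univ _ (Finset.mem_univ k)]
    congr 1
    · rw [Function.update_self]
    · exact Finset.prod_congr rfl fun i hi => by
        rw [Function.update_of_ne (Finset.mem_erase.mp hi).1]
  simp only [funeq]
  have hpow : HasDerivAt (fun t : ℝ => t ^ n k / (Nat.factorial (n k) : ℝ))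
      ((n k : ℝ) * w0 k ^ (n k - 1) / (Nat.factorial (n k) : ℝ)) (w0 k) :=
    (hasDerivAt_pow (n k) (w0 k)).div_const _
  have h := hpow.mul_const (∏ i ∈ Finset.univ.erase k, w0 i ^ n i / (Nat.factorial (n i) : ℝ))
  refine h.congr_deriv (Eq.symm ?_)
  have hw0prod : (∏ i, w0 i ^ n i / (Nat.factorial (n i) : ℝ))
      = (w0 k ^ n k / (Nat.factorial (n k) : ℝ)) *
        ∏ i ∈ Finset.univ.erase k, w0 i ^ n i / (Nat.factorial (n i) : ℝ) :=
    (Finset.mul_prod_erase Finset.univ _ (Finset.mem_univ k)).symm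
  rw [hw0prod]
  rcases Nat.eq_zero_or_pos (n k) with h0 | hpos
  · simp [h0]
  · have hsplit : w0 k ^ n k = w0 k ^ (n k - 1) * w0 k := by
      conv_lhs => rw [show n k = (n k - 1) + 1 from (Nat.succ_pred_eq_of_pos hpos).symm]
      rw [pow_succ]
    rw [hsplit]
    have hw : w0 k ≠ 0 := (hw0 k).ne'
    field_simp

theorem hasDerivAt_Pgbs {m : ℕ} (A : Matrix (Fin m) (Fin m) ℝ) (hA : A.IsSymm)
    (n : Fin m → ℕ) (w0 : Fin m → ℝ) (hw0 : ∀ i, 0 < w0 i)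
    (hnorm : ‖WAW A w0‖ < 1) (k : Fin m) :
    HasDerivAt (fun t => Pgbs A n (Function.update w0 k t))
      ((((n k : ℝ) - navg A w0 k) / w0 k) * Pgbs A n w0) (w0 k) := by
  have h1 := hasDerivAt_sqrtdet A hA w0 hw0 hnorm k
  have h2 := hasDerivAt_prodterm n w0 hw0 k
  have h := (h1.mul_const (hafnian (repMat A n) ^ 2)).fun_mul h2
  simp only [Function.update_eq_self] at h
  simp only [Pgbs]
  refine h.congr_deriv (Eq.symm ?_)
  ring

/-- for a finitely supported cost function `H : ℕ^m → ℝ`, the stochastic-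
optimization cost `C(w) = Σ_{n̄ ∈ supp H} H(n̄) P(w, n̄)` in the WAW parametrization, with
`w⁰ ∈ (0,∞)^m` and `‖A_{W(w⁰)}‖ < 1` (L2 operator norm), has partial derivative
`∂C/∂w_k = Σ_{n̄ ∈ supp H} H(n̄) · ((n_k − ⟨n_k⟩)/w⁰_k) · P(w⁰, n̄)` at `w⁰`. -/
theorem hasDerivAt_cost_weight {m : ℕ} (A : Matrix (Fin m) (Fin m) ℝ) (hA : A.IsSymm)
    (H : (Fin m → ℕ) → ℝ) (hH : (Function.support H).Finite)
    (w0 : Fin m → ℝ) (hw0 : ∀ i, 0 < w0 i) (hnorm : ‖WAW A w0‖ < 1) (k : Fin m) :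
    HasDerivAt (fun t => ∑ n ∈ hH.toFinset, H n * Pgbs A n (Function.update w0 k t))
      (∑ n ∈ hH.toFinset, H n * ((((n k : ℝ) - navg A w0 k) / w0 k) * Pgbs A n w0))
      (w0 k) := by
  refine HasDerivAt.fun_sum fun n _ => ?_
  exact (hasDerivAt_Pgbs A hA n w0 hw0 hnorm k).const_mul (H n)
end
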